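/- Let E be a finite-dimensional real vector space, U ⊆ E open with 0 in its closure, u_1,…,u_n ∈ E* distinct and nonzero, and f_1,…,f_n : E → ℂ continuous functions such that every open subset of U contains a point x with ∑_j |f_j(x)| ≠ 0. Then there exist C > 0, d > 0, a point x ∈ U, and an open set V with 0 ∈ closure(V), such that for all h ∈ V with y = x + h, all m ∈ ℕ, and all integers N ≥ d/‖h‖: (1/N) ∑_{t=m}^{m+N−1} |∑_{j=1}^n f_j(x) e^{i t u_j(x)} − f_j(y) e^{i t u_j(y)}|² ≥ C. -/

import Mathlib

open Complex

lemma sin_low {a : ℝ} (h0 : 0 < a) (h1 : a ≤ 1) : (3/4) * a ≤ Real.sin a := by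
  have hs := Real.sin_gt_sub_cube h0
  have hc : a ^ 3 ≤ a := by nlinarith [sq_nonneg a, sq_nonneg (1 - a)]
  nlinarith

lemma low_bd {a : ℝ} (ha : |a| ≤ 1) : (3/4) * |a| ≤ ‖Complex.exp (Complex.I * a) - 1‖ := by
  have him : (Complex.exp (Complex.I * a) - 1).im = Real.sin a := by
    rw [mul_comm]
    simp [Complex.exp_ofReal_mul_I_im]
  have h1 : |Real.sin a| ≤ ‖Complex.exp (Complex.I * a) - 1‖ := by
    rw [← him]; exact Complex.abs_im_le_norm _
  have h2 : (3/4) * |a| ≤ |Real.sin a| := by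
    rcases lt_trichotomy a 0 with h | h | h
    · have h0 : 0 < -a := by linarith
      have h1' : -a ≤ 1 := by rw [abs_of_neg h] at ha; linarith
      have hs := sin_low h0 h1'
      rw [Real.sin_neg] at hs
      rw [abs_of_neg h]
      have : Real.sin a ≤ -((3/4) * -a) := by linarith
      calc (3/4) * -a ≤ -Real.sin a := by linarith
        _ ≤ |Real.sin a| := neg_le_abs _
    · simp [h]
    · have h1' : a ≤ 1 := by rw [abs_of_pos h] at ha; linarith
      have hs := sin_low h h1'
      rw [abs_of_pos h]
      calc (3/4) * a ≤ Real.sin a := hs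
        _ ≤ |Real.sin a| := le_abs_self _
  linarith

lemma term_expand (a b : ℝ) (t : ℕ) (p q : ℂ) :
    (p * Complex.exp (Complex.I * t * (a : ℂ))) * (starRingEnd ℂ) (q * Complex.exp (Complex.I * t * (b : ℂ)))
      = (p * (starRingEnd ℂ) q) * (Complex.exp (Complex.I * ((a - b : ℝ) : ℂ))) ^ t := by
  rw [← Complex.exp_nat_mul]
  rw [map_mul, ← Complex.exp_conj]
  rw [show (starRingEnd ℂ) (Complex.I * t * (b : ℂ)) = -(Complex.I * t * (b : ℂ)) by
    simp [map_mul, Complex.conj_I]]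
  rw [mul_mul_mul_comm, ← Complex.exp_add]
  congr 2
  push_cast
  ring


lemma up_bd {a : ℝ} (ha : |a| ≤ 1) : ‖Complex.exp (Complex.I * a) - 1‖ ≤ 2 * |a| := by
  have h := Complex.norm_exp_sub_one_le (x := Complex.I * a) (by simpa using ha)
  simpa using h

lemma pert_bd (a η : ℝ) (hη : |η| ≤ 1) :
    ‖Complex.exp (Complex.I * a) - 1‖ - 2 * |η|
      ≤ ‖Complex.exp (Complex.I * ((a + η : ℝ))) - 1‖ := by
  have key : Complex.exp (Complex.I * a) - 1
      = (Complex.exp (Complex.I * ((a + η : ℝ))) - 1)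
        + Complex.exp (Complex.I * a) * (1 - Complex.exp (Complex.I * η)) := by
    rw [show (Complex.I * ((a + η : ℝ))) = Complex.I * a + Complex.I * η by push_cast; ring,
      Complex.exp_add]
    ring
  have h1 : ‖Complex.exp (Complex.I * a) - 1‖
      ≤ ‖Complex.exp (Complex.I * ((a + η : ℝ))) - 1‖
        + ‖Complex.exp (Complex.I * a) * (1 - Complex.exp (Complex.I * η))‖ := by
    rw [key]; exact norm_add_le _ _
  have h2 : ‖Complex.exp (Complex.I * a) * (1 - Complex.exp (Complex.I * η))‖
      ≤ 2 * |η| := by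
    rw [norm_mul]
    have heq : ‖1 - Complex.exp (Complex.I * η)‖
        = ‖Complex.exp (Complex.I * η) - 1‖ := by rw [norm_sub_rev]
    rw [heq]
    have h3 := up_bd hη
    calc ‖Complex.exp (Complex.I * (a:ℂ))‖ * ‖Complex.exp (Complex.I * (η:ℂ)) - 1‖
        = ‖Complex.exp (Complex.I * (η:ℂ)) - 1‖ := by simp [Complex.norm_exp]
      _ ≤ 2 * |η| := h3
  linarith

lemma abs_exp_I_neg (a : ℝ) : ‖Complex.exp (Complex.I * ((-a : ℝ) : ℂ)) - 1‖
    = ‖Complex.exp (Complex.I * (a : ℂ)) - 1‖ := by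
  have h : Complex.exp (Complex.I * ((-a : ℝ) : ℂ)) - 1
      = (starRingEnd ℂ) (Complex.exp (Complex.I * a) - 1) := by
    rw [map_sub, ← Complex.exp_conj]
    simp
  rw [h, Complex.norm_conj]

lemma key_exp_sum {K : Type*} [Fintype K] (c : K → ℂ) (lam : K → ℝ) (δ B : ℝ)
    (hδ : 0 < δ) (hB : ∀ k, ‖c k‖ ≤ B)
    (hsep : ∀ k l, k ≠ l →
      δ ≤ ‖Complex.exp (Complex.I * ((lam k - lam l : ℝ) : ℂ)) - 1‖)
    (m N : ℕ) :
    (N : ℝ) * (∑ k, ‖c k‖ ^ 2) - (Fintype.card K : ℝ)^2 * (2 * B^2 / δ)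
      ≤ ∑ t ∈ Finset.Ico m (m + N),
          ‖∑ k, c k * Complex.exp (Complex.I * t * (lam k : ℂ))‖ ^ 2 := by
  classical
  rcases isEmpty_or_nonempty K with hK | hK
  · simp only [Finset.univ_eq_empty, Finset.sum_empty, mul_zero, map_zero]
    have : (0:ℝ) ≤ ∑ t ∈ Finset.Ico m (m + N), (0:ℝ) ^ 2 := by positivity
    simpa using this
  set z : K → K → ℂ := fun k l => Complex.exp (Complex.I * ((lam k - lam l : ℝ) : ℂ)) with hz
  have hB0 : 0 ≤ B := le_trans (norm_nonneg _) (hB (Classical.ofNonempty))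
  -- pointwise expansion
  have hpoint : ∀ t : ℕ, ‖∑ k, c k * Complex.exp (Complex.I * t * (lam k : ℂ))‖ ^ 2
      = (∑ k, ∑ l, (c k * (starRingEnd ℂ) (c l)) * (z k l) ^ t).re := by
    intro t
    set w : ℂ := ∑ k, c k * Complex.exp (Complex.I * t * (lam k : ℂ)) with hw
    have h0 : ‖w‖ ^ 2 = (w * (starRingEnd ℂ) w).re := by
      rw [Complex.sq_norm, Complex.mul_conj]; simp
    rw [h0, hw, map_sum, Finset.sum_mul_sum]
    congr 2
    funext k
    congr 1
    funext l
    exact term_expand (lam k) (lam l) t (c k) (c l)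
  -- geometric sums
  set G : K → K → ℂ := fun k l => ∑ t ∈ Finset.Ico m (m + N), (z k l) ^ t with hG
  have hsum : ∑ t ∈ Finset.Ico m (m + N),
      ‖∑ k, c k * Complex.exp (Complex.I * t * (lam k : ℂ))‖ ^ 2
      = ∑ k, ∑ l, ((c k * (starRingEnd ℂ) (c l)) * G k l).re := by
    have e1 : ∑ t ∈ Finset.Ico m (m + N),
        ‖∑ k, c k * Complex.exp (Complex.I * t * (lam k : ℂ))‖ ^ 2
        = (∑ t ∈ Finset.Ico m (m + N), ∑ k, ∑ l,
            (c k * (starRingEnd ℂ) (c l)) * (z k l) ^ t).re := by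
      rw [Complex.re_sum]
      exact Finset.sum_congr rfl (fun t _ => hpoint t)
    have e2 : (∑ t ∈ Finset.Ico m (m + N), ∑ k, ∑ l,
          (c k * (starRingEnd ℂ) (c l)) * (z k l) ^ t)
        = ∑ k, ∑ l, (c k * (starRingEnd ℂ) (c l)) * G k l := by
      rw [Finset.sum_comm]
      refine Finset.sum_congr rfl (fun k _ => ?_)
      rw [Finset.sum_comm]
      refine Finset.sum_congr rfl (fun l _ => ?_)
      rw [← Finset.mul_sum]
    rw [e1, e2, Complex.re_sum]
    exact Finset.sum_congr rfl (fun k _ => Complex.re_sum _ _)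
  rw [hsum]
  -- diagonal terms
  have hdiag : ∀ k : K, ((c k * (starRingEnd ℂ) (c k)) * G k k).re
      = (N : ℝ) * ‖c k‖ ^ 2 := by
    intro k
    have hz1 : z k k = 1 := by simp [hz]
    have hGkk : G k k = (N : ℂ) := by
      simp [hG, hz1, Nat.add_sub_cancel_left]
    rw [hGkk, Complex.mul_conj]
    simp [Complex.sq_norm, mul_comm]
  -- off-diagonal bounds
  have hoff : ∀ k l : K, k ≠ l → -(2 * B ^ 2 / δ) ≤ ((c k * (starRingEnd ℂ) (c l)) * G k l).re := by
    intro k l hkl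
    have hzne : z k l ≠ 1 := by
      intro h
      have : δ ≤ ‖z k l - 1‖ := hsep k l hkl
      rw [h] at this
      simp at this
      linarith
    have hGval : G k l = ((z k l) ^ (m + N) - (z k l) ^ m) / (z k l - 1) :=
      geom_sum_Ico hzne (Nat.le_add_right m N)
    have habs_z : ‖z k l‖ = 1 := by simp [hz, Complex.norm_exp]
    have hGabs : ‖G k l‖ ≤ 2 / δ := by
      rw [hGval, norm_div]
      have hnum : ‖(z k l) ^ (m + N) - (z k l) ^ m‖ ≤ 2 := by
        calc ‖(z k l) ^ (m + N) - (z k l) ^ m‖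
            ≤ ‖(z k l) ^ (m + N)‖ + ‖(z k l) ^ m‖ :=
              norm_sub_le _ _
          _ = 2 := by rw [norm_pow, norm_pow, habs_z]; norm_num
      have hden : δ ≤ ‖z k l - 1‖ := hsep k l hkl
      have hden0 : 0 < ‖z k l - 1‖ := lt_of_lt_of_le hδ hden
      exact div_le_div₀ (by norm_num) hnum hδ hden
    have habs_term : ‖(c k * (starRingEnd ℂ) (c l)) * G k l‖ ≤ 2 * B ^ 2 / δ := by
      rw [norm_mul, norm_mul, Complex.norm_conj]
      have h1 : ‖c k‖ * ‖c l‖ ≤ B ^ 2 := by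
        calc ‖c k‖ * ‖c l‖ ≤ B * B :=
          mul_le_mul (hB k) (hB l) (norm_nonneg _) hB0
        _ = B ^ 2 := (sq B).symm
      calc ‖c k‖ * ‖c l‖ * ‖G k l‖
          ≤ B ^ 2 * (2 / δ) := by
            apply mul_le_mul h1 hGabs (norm_nonneg _) (by positivity)
        _ = 2 * B ^ 2 / δ := by ring
    calc -(2 * B ^ 2 / δ) ≤ -(‖(c k * (starRingEnd ℂ) (c l)) * G k l‖) := by
          linarith
      _ ≤ ((c k * (starRingEnd ℂ) (c l)) * G k l).re := by
          have ha := Complex.abs_re_le_norm ((c k * (starRingEnd ℂ) (c l)) * G k l)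
          have hb := neg_abs_le ((c k * (starRingEnd ℂ) (c l)) * G k l).re
          linarith
  -- assemble
  have hsplit : ∀ k : K, (N : ℝ) * ‖c k‖ ^ 2
        - (Fintype.card K : ℝ) * (2 * B ^ 2 / δ)
      ≤ ∑ l, ((c k * (starRingEnd ℂ) (c l)) * G k l).re := by
    intro k
    rw [← Finset.add_sum_erase _ _ (Finset.mem_univ k), hdiag k]
    have h1 : ∑ l ∈ Finset.univ.erase k, -(2 * B ^ 2 / δ)
        ≤ ∑ l ∈ Finset.univ.erase k, ((c k * (starRingEnd ℂ) (c l)) * G k l).re :=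
      Finset.sum_le_sum (fun l hl => hoff k l (Finset.ne_of_mem_erase hl).symm)
    have h2 : ∑ l ∈ Finset.univ.erase k, -(2 * B ^ 2 / δ)
        = -((Finset.univ.erase k).card * (2 * B ^ 2 / δ)) := by
      rw [Finset.sum_const, nsmul_eq_mul]; ring
    have h3 : ((Finset.univ.erase k).card : ℝ) ≤ (Fintype.card K : ℝ) := by
      exact_mod_cast Finset.card_le_card (Finset.erase_subset _ _)
    have h4 : 0 ≤ 2 * B ^ 2 / δ := by positivity
    nlinarith [h1, h2, h3, h4]
  calc (N : ℝ) * (∑ k, ‖c k‖ ^ 2) - (Fintype.card K : ℝ)^2 * (2 * B^2 / δ)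
      = ∑ k : K, ((N : ℝ) * ‖c k‖ ^ 2
          - (Fintype.card K : ℝ) * (2 * B ^ 2 / δ)) := by
        rw [Finset.sum_sub_distrib, ← Finset.mul_sum, Finset.sum_const, nsmul_eq_mul]
        simp [Finset.card_univ]
        ring
    _ ≤ ∑ k, ∑ l, ((c k * (starRingEnd ℂ) (c l)) * G k l).re :=
        Finset.sum_le_sum (fun k _ => hsplit k)

section Aux
variable {E : Type*} [NormedAddCommGroup E] [NormedSpace ℝ E] [FiniteDimensional ℝ E]

lemma lin_surj (w : E →ₗ[ℝ] ℝ) (hw : w ≠ 0) : Function.Surjective w := by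
  obtain ⟨y, hy⟩ : ∃ y, w y ≠ 0 := by
    by_contra hcon
    push_neg at hcon
    exact hw (LinearMap.ext fun y => by simp [hcon y])
  intro c
  exact ⟨(c / w y) • y, by simp [map_smul, smul_eq_mul, div_mul_cancel₀ _ hy]⟩

lemma dense_avoid (w : E →ₗ[ℝ] ℝ) (hw : w ≠ 0) (S : Set ℝ) (hS : S.Countable) :
    Dense {y : E | w y ∉ S} := by
  rw [dense_iff_inter_open]
  intro O hO hOne
  have hcont : Continuous w := w.continuous_of_finiteDimensional
  have hclm : IsOpenMap (LinearMap.toContinuousLinearMap w) :=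
    ContinuousLinearMap.isOpenMap _ (lin_surj w hw)
  have himg : IsOpen ((LinearMap.toContinuousLinearMap w) '' O) := hclm O hO
  have himgne : ((LinearMap.toContinuousLinearMap w) '' O).Nonempty := hOne.image _
  have hdc : Dense Sᶜ := hS.dense_compl ℝ
  obtain ⟨c, hc1, hc2⟩ := hdc.inter_open_nonempty _ himg himgne
  obtain ⟨y, hyO, hyc⟩ := hc1
  refine ⟨y, hyO, ?_⟩
  simp only [Set.mem_setOf_eq]
  have : (LinearMap.toContinuousLinearMap w) y = w y := rfl
  rw [this] at hyc
  rw [hyc]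
  exact hc2

lemma open_avoid (w : E →ₗ[ℝ] ℝ) (S : Set ℝ) (hS : IsClosed S) :
    IsOpen {y : E | w y ∉ S} := by
  have hcont : Continuous w := w.continuous_of_finiteDimensional
  exact hS.isOpen_compl.preimage hcont

lemma countable_exp_one : {θ : ℝ | Complex.exp (Complex.I * θ) = 1}.Countable := by
  apply Set.Countable.mono _ (Set.countable_range fun m : ℤ => (m : ℝ) * (2 * Real.pi))
  intro θ hθ
  rw [Set.mem_setOf_eq, Complex.exp_eq_one_iff] at hθ
  obtain ⟨k, hk⟩ := hθ
  refine ⟨k, ?_⟩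
  have := congrArg Complex.im hk
  simpa using this.symm

lemma closed_exp_one : IsClosed {θ : ℝ | Complex.exp (Complex.I * θ) = 1} := by
  have : Continuous fun θ : ℝ => Complex.exp (Complex.I * θ) := by
    exact Complex.continuous_exp.comp (continuous_const.mul Complex.continuous_ofReal)
  exact isClosed_singleton.preimage this

end Aux

set_option maxHeartbeats 2000000 in
theorem exp_sum_lower_bound
    {E : Type*} [NormedAddCommGroup E] [NormedSpace ℝ E] [FiniteDimensional ℝ E]
    (U : Set E) (hU : IsOpen U) (hU0 : (0 : E) ∈ closure U)
    (n : ℕ) (u : Fin n → E →ₗ[ℝ] ℝ) (hu_inj : Function.Injective u)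
    (hu_ne : ∀ j, u j ≠ 0)
    (f : Fin n → E → ℂ) (hf : ∀ j, Continuous (f j))
    (hne : ∀ U' : Set E, U' ⊆ U → IsOpen U' → U'.Nonempty →
      ∃ x ∈ U', ∑ j, ‖f j x‖ ≠ 0) :
    ∃ C : ℝ, 0 < C ∧ ∃ d : ℝ, 0 < d ∧ ∃ x ∈ U, ∃ V : Set E, IsOpen V ∧ (0 : E) ∈ closure V ∧
      ∀ h ∈ V, ∀ m N : ℕ, d / ‖h‖ ≤ (N : ℝ) →
        C ≤ (1 / (N : ℝ)) * ∑ t ∈ Finset.Ico m (m + N),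
          ‖∑ j, (f j x * Complex.exp (Complex.I * t * (u j x))
            - f j (x + h) * Complex.exp (Complex.I * t * (u j (x + h))))‖ ^ 2 := by
  classical
  -- U is nonempty
  have hUne : U.Nonempty := by
    rcases Set.eq_empty_or_nonempty U with hc | hc
    · rw [hc] at hU0; simp at hU0
    · exact hc
  obtain ⟨x₁, hx₁U, hx₁⟩ := hne U Set.Subset.rfl hU hUne
  have hnpos : 0 < n := by
    rcases Nat.eq_zero_or_pos n with hc | hc
    · subst hc; simp at hx₁
    · exact hc
  -- the continuous "total size" function
  set g : E → ℝ := fun y => ∑ j, ‖f j y‖ with hgdef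
  have hgc : Continuous g := by
    apply continuous_finset_sum
    exact fun j _ => continuous_norm.comp (hf j)
  set W : Set E := U ∩ {y | 0 < g y} with hWdef
  have hWo : IsOpen W := hU.inter (isOpen_lt continuous_const hgc)
  have hWne : W.Nonempty := by
    refine ⟨x₁, hx₁U, ?_⟩
    have h0 : 0 ≤ g x₁ := Finset.sum_nonneg fun j _ => norm_nonneg _
    exact lt_of_le_of_ne h0 (Ne.symm hx₁)
  -- dense open sets avoiding resonances
  set D : Fin n × Fin n → Set E := fun p =>
    if p.1 = p.2 then Set.univ else
      {y | (u p.1 - u p.2) y ∉ {θ : ℝ | Complex.exp (Complex.I * θ) = 1}} with hDdef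
  have hDo : ∀ p, IsOpen (D p) := by
    intro p
    by_cases hp : p.1 = p.2
    · simp [hDdef, hp]
    · simp only [hDdef, if_neg hp]
      exact open_avoid _ _ closed_exp_one
  have hDd : ∀ p, Dense (D p) := by
    intro p
    by_cases hp : p.1 = p.2
    · simp [hDdef, hp, dense_univ]
    · simp only [hDdef, if_neg hp]
      apply dense_avoid _ _ _ countable_exp_one
      intro hc
      exact hp (hu_inj (by rwa [sub_eq_zero] at hc))
  have hdense : Dense (⋂ p, D p) := dense_iInter_of_isOpen hDo hDd
  obtain ⟨x, hxW, hxD⟩ := hdense.inter_open_nonempty W hWo hWne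
  have hxU : x ∈ U := hxW.1
  have hgx : 0 < g x := hxW.2
  have hx_sep : ∀ j k : Fin n, j ≠ k →
      Complex.exp (Complex.I * ((u j x - u k x : ℝ) : ℂ)) ≠ 1 := by
    intro j k hjk
    have := Set.mem_iInter.mp hxD (j, k)
    simp only [hDdef, if_neg hjk] at this
    simpa [LinearMap.sub_apply] using this
  -- pick a nonzero coefficient
  obtain ⟨j₀, -, hj₀⟩ := Finset.exists_ne_zero_of_sum_ne_zero (ne_of_gt hgx)
  have hfj₀ : f j₀ x ≠ 0 := fun hc => hj₀ (by simp [hc])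
  -- the minimal separation ρ at x
  set P : Finset (Fin n × Fin n) := Finset.univ.filter (fun p => p.1 ≠ p.2) with hPdef
  set T : Finset ℝ := insert 1 (P.image fun p =>
    ‖Complex.exp (Complex.I * ((u p.1 x - u p.2 x : ℝ) : ℂ)) - 1‖) with hTdef
  have hTne : T.Nonempty := ⟨1, Finset.mem_insert_self _ _⟩
  set ρ : ℝ := T.min' hTne with hρdef
  have hρ1 : ρ ≤ 1 := Finset.min'_le _ _ (Finset.mem_insert_self _ _)
  have hρpos : 0 < ρ := by
    have hmem := T.min'_mem hTne
    rw [← hρdef] at hmem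
    rcases Finset.mem_insert.mp hmem with hc | hc
    · rw [hc]; norm_num
    · obtain ⟨p, hp, hval⟩ := Finset.mem_image.mp hc
      have hps := Finset.mem_filter.mp hp
      rw [← hval]
      have := hx_sep p.1 p.2 hps.2
      have : Complex.exp (Complex.I * ((u p.1 x - u p.2 x : ℝ) : ℂ)) - 1 ≠ 0 :=
        sub_ne_zero.mpr this
      exact norm_pos_iff.mpr this
  have hρ_le : ∀ j k : Fin n, j ≠ k →
      ρ ≤ ‖Complex.exp (Complex.I * ((u j x - u k x : ℝ) : ℂ)) - 1‖ := by
    intro j k hjk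
    apply Finset.min'_le
    apply Finset.mem_insert_of_mem
    exact Finset.mem_image.mpr ⟨(j, k), Finset.mem_filter.mpr ⟨Finset.mem_univ _, hjk⟩, rfl⟩
  -- uniform norm bound on the u j
  set TM : Finset ℝ := insert 1 (Finset.univ.image fun j =>
    ‖LinearMap.toContinuousLinearMap (u j)‖) with hTMdef
  have hTMne : TM.Nonempty := ⟨1, Finset.mem_insert_self _ _⟩
  set M : ℝ := TM.max' hTMne with hMdef
  have hM1 : 1 ≤ M := Finset.le_max' _ _ (Finset.mem_insert_self _ _)
  have hMpos : 0 < M := lt_of_lt_of_le one_pos hM1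
  have hM : ∀ (j : Fin n) (v : E), |u j v| ≤ M * ‖v‖ := by
    intro j v
    have h1 : |u j v| ≤ ‖LinearMap.toContinuousLinearMap (u j)‖ * ‖v‖ := by
      have := (LinearMap.toContinuousLinearMap (u j)).le_opNorm v
      simpa using this
    have h2 : ‖LinearMap.toContinuousLinearMap (u j)‖ ≤ M := by
      rw [hMdef]
      exact Finset.le_max' TM _ (Finset.mem_insert_of_mem
        (Finset.mem_image.mpr ⟨j, Finset.mem_univ j, rfl⟩))
    calc |u j v| ≤ ‖LinearMap.toContinuousLinearMap (u j)‖ * ‖v‖ := h1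
      _ ≤ M * ‖v‖ := mul_le_mul_of_nonneg_right h2 (norm_nonneg v)
  -- a direction h₀ on which no u j vanishes
  have hdense2 : Dense (⋂ j : Fin n, {y : E | u j y ∉ ({0} : Set ℝ)}) := by
    apply dense_iInter_of_isOpen
    · exact fun j => open_avoid _ _ isClosed_singleton
    · exact fun j => dense_avoid _ (hu_ne j) _ (Set.countable_singleton 0)
  obtain ⟨h₀, hh₀mem⟩ := hdense2.nonempty
  have hh₀ : ∀ j, u j h₀ ≠ 0 := by
    intro j
    have := Set.mem_iInter.mp hh₀mem j
    simpa using this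
  have hh₀ne : h₀ ≠ 0 := fun hc => hh₀ j₀ (by rw [hc]; simp)
  have hh₀norm : 0 < ‖h₀‖ := norm_pos_iff.mpr hh₀ne
  -- minimal value of |u j h₀|
  set Tm : Finset ℝ := Finset.univ.image fun j : Fin n => |u j h₀| with hTmdef
  have hTmne : Tm.Nonempty := ⟨|u j₀ h₀|, Finset.mem_image.mpr ⟨j₀, Finset.mem_univ j₀, rfl⟩⟩
  set m₀ : ℝ := Tm.min' hTmne with hm₀def
  have hm₀le : ∀ j, m₀ ≤ |u j h₀| := fun j =>
    Finset.min'_le _ _ (Finset.mem_image.mpr ⟨j, Finset.mem_univ j, rfl⟩)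
  have hm₀pos : 0 < m₀ := by
    have hmem := Tm.min'_mem hTmne
    rw [← hm₀def] at hmem
    obtain ⟨j, -, hval⟩ := Finset.mem_image.mp hmem
    rw [← hval]
    exact abs_pos.mpr (hh₀ j)
  set ε : ℝ := m₀ / (2 * ‖h₀‖) with hεdef
  have hεpos : 0 < ε := by positivity
  -- continuity radius
  obtain ⟨r₁, hr₁pos, hgr⟩ := Metric.continuousAt_iff.mp hgc.continuousAt 1 one_pos
  set B₀ : ℝ := g x + 1 with hB₀def
  have hB₀pos : 0 < B₀ := by
    have : 0 ≤ g x := le_of_lt hgx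
    positivity
  have hgB : ∀ y : E, dist y x < r₁ → g y ≤ B₀ := by
    intro y hy
    have := hgr hy
    rw [Real.dist_eq] at this
    have := abs_lt.mp this
    rw [hB₀def]; linarith [this.1, this.2]
  -- the radius r
  set r : ℝ := min r₁ (min (ρ / (8 * M)) (min (1 / (2 * M)) (ρ / ε))) with hrdef
  have hrpos : 0 < r := by
    apply lt_min hr₁pos
    apply lt_min (by positivity)
    exact lt_min (by positivity) (by positivity)
  have hr_r₁ : r ≤ r₁ := min_le_left _ _
  have hr_ρM : r ≤ ρ / (8 * M) := le_trans (min_le_right _ _) (min_le_left _ _)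
  have hr_M : r ≤ 1 / (2 * M) :=
    le_trans (min_le_right _ _) (le_trans (min_le_right _ _) (min_le_left _ _))
  have hr_ρε : r ≤ ρ / ε :=
    le_trans (min_le_right _ _) (le_trans (min_le_right _ _) (min_le_right _ _))
  -- the constants
  set C : ℝ := ‖f j₀ x‖ ^ 2 / 2 with hCdef
  have hC : 0 < C := by
    have : 0 < ‖f j₀ x‖ := norm_pos_iff.mpr hfj₀
    positivity
  set d : ℝ := max 1 (16 * (n : ℝ) ^ 2 * B₀ ^ 2 / (ε * C)) with hddef
  have hd : 0 < d := lt_of_lt_of_le one_pos (le_max_left _ _)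
  refine ⟨C, hC, d, hd, x, hxU, ?_⟩
  -- the set V
  set V : Set E := {h : E | ‖h‖ < r ∧ ∀ j, ε * ‖h‖ < |u j h|} with hVdef
  have hVo : IsOpen V := by
    have : V = {h : E | ‖h‖ < r} ∩ ⋂ j, {h : E | ε * ‖h‖ < |u j h|} := by
      ext y; simp [hVdef, Set.mem_iInter]
    rw [this]
    apply IsOpen.inter (isOpen_lt continuous_norm continuous_const)
    apply isOpen_iInter_of_finite
    intro j
    exact isOpen_lt (continuous_const.mul continuous_norm)
      ((u j).continuous_of_finiteDimensional.abs)
  have hV0 : (0 : E) ∈ closure V := by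
    rw [Metric.mem_closure_iff]
    intro ε' hε'
    set t : ℝ := min ε' r / (2 * ‖h₀‖) with htdef
    have htpos : 0 < t := by
      have : 0 < min ε' r := lt_min hε' hrpos
      positivity
    refine ⟨t • h₀, ?_, ?_⟩
    · constructor
      · rw [norm_smul, Real.norm_eq_abs, abs_of_pos htpos, htdef]
        have : min ε' r / (2 * ‖h₀‖) * ‖h₀‖ = min ε' r / 2 := by
          field_simp
        rw [this]
        calc min ε' r / 2 < min ε' r := by linarith [lt_min hε' hrpos]
          _ ≤ r := min_le_right _ _
      · intro j
        rw [norm_smul, Real.norm_eq_abs, abs_of_pos htpos, map_smul, smul_eq_mul,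
          abs_mul, abs_of_pos htpos]
        have h1 : ε * ‖h₀‖ < m₀ := by
          rw [hεdef]
          have heq : m₀ / (2 * ‖h₀‖) * ‖h₀‖ = m₀ / 2 := by
            field_simp
          rw [heq]
          linarith
        calc ε * (t * ‖h₀‖) = t * (ε * ‖h₀‖) := by ring
          _ < t * m₀ := by exact mul_lt_mul_of_pos_left h1 htpos
          _ ≤ t * |u j h₀| := mul_le_mul_of_nonneg_left (hm₀le j) (le_of_lt htpos)
    · rw [dist_zero_left, norm_smul, Real.norm_eq_abs, abs_of_pos htpos, htdef]
      have : min ε' r / (2 * ‖h₀‖) * ‖h₀‖ = min ε' r / 2 := by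
        field_simp
      rw [this]
      calc min ε' r / 2 < min ε' r := by linarith [lt_min hε' hrpos]
        _ ≤ ε' := min_le_left _ _
  refine ⟨V, hVo, hV0, ?_⟩
  intro h hVh m N hN
  obtain ⟨hhr, hhu⟩ := hVh
  have hhne : h ≠ 0 := by
    rintro rfl
    have := hhu j₀
    simp at this
  have hhnorm : 0 < ‖h‖ := norm_pos_iff.mpr hhne
  have hNpos : 0 < (N : ℝ) := lt_of_lt_of_le (by positivity) hN
  have hyB : g (x + h) ≤ B₀ := by
    apply hgB
    rw [dist_eq_norm]
    simpa using lt_of_lt_of_le hhr hr_r₁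
  have hxB : g x ≤ B₀ := by rw [hB₀def]; linarith
  set c : Fin n ⊕ Fin n → ℂ := Sum.elim (fun j => f j x) (fun j => -(f j (x + h))) with hcdef
  set lam : Fin n ⊕ Fin n → ℝ := Sum.elim (fun j => u j x) (fun j => u j (x + h)) with hlamdef
  set δ : ℝ := ε * ‖h‖ / 2 with hδdef
  have hδpos : 0 < δ := by positivity
  have habs_le : ∀ (j : Fin n) (y : E), ‖f j y‖ ≤ g y := fun j y =>
    Finset.single_le_sum (f := fun i => ‖f i y‖)
      (fun i _ => norm_nonneg _) (Finset.mem_univ j)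
  have hcB : ∀ k, ‖c k‖ ≤ B₀ := by
    intro k
    cases k with
    | inl j =>
      simpa [hcdef] using le_trans (habs_le j x) hxB
    | inr j =>
      simpa [hcdef] using le_trans (habs_le j (x + h)) hyB
  -- size bounds on the perturbations
  have hMh : M * ‖h‖ ≤ 1 / 2 := by
    have h1 : M * ‖h‖ ≤ M * r := mul_le_mul_of_nonneg_left (le_of_lt hhr) (le_of_lt hMpos)
    have h2 : M * r ≤ M * (1 / (2 * M)) := mul_le_mul_of_nonneg_left hr_M (le_of_lt hMpos)
    have h3 : M * (1 / (2 * M)) = 1 / 2 := by field_simp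
    linarith
  have hMρ : 4 * (M * ‖h‖) ≤ ρ / 2 := by
    have h1 : M * ‖h‖ ≤ M * r := mul_le_mul_of_nonneg_left (le_of_lt hhr) (le_of_lt hMpos)
    have h2 : M * r ≤ M * (ρ / (8 * M)) := mul_le_mul_of_nonneg_left hr_ρM (le_of_lt hMpos)
    have h3 : M * (ρ / (8 * M)) = ρ / 8 := by field_simp
    linarith
  have hδρ : δ ≤ ρ / 2 := by
    have h1 : ε * ‖h‖ ≤ ε * r := mul_le_mul_of_nonneg_left (le_of_lt hhr) (le_of_lt hεpos)
    have h2 : ε * r ≤ ε * (ρ / ε) := mul_le_mul_of_nonneg_left hr_ρε (le_of_lt hεpos)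
    have h3 : ε * (ρ / ε) = ρ := by field_simp
    rw [hδdef]
    linarith
  have huh : ∀ j : Fin n, |u j h| ≤ M * ‖h‖ := fun j => hM j h
  -- the perturbed pair lemma
  have hpair : ∀ j k : Fin n, j ≠ k → ∀ η : ℝ, |η| ≤ 1 → 2 * |η| ≤ ρ / 2 →
      δ ≤ ‖Complex.exp (Complex.I * ((u j x - u k x + η : ℝ) : ℂ)) - 1‖ := by
    intro j k hjk η hη1 hη2
    have h1 := pert_bd (u j x - u k x) η hη1
    have h2 := hρ_le j k hjk
    linarith
  -- mixed pairs
  have hmixed : ∀ j k : Fin n,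
      δ ≤ ‖Complex.exp (Complex.I * ((u j x - u k (x + h) : ℝ) : ℂ)) - 1‖ := by
    intro j k
    by_cases hjk : j = k
    · subst hjk
      have harg : u j x - u j (x + h) = -(u j h) := by
        rw [map_add]; ring
      rw [harg, abs_exp_I_neg]
      have hb1 : |u j h| ≤ 1 := by linarith [huh j]
      have hb2 := low_bd hb1
      have hb3 := hhu j
      rw [hδdef]
      calc ε * ‖h‖ / 2 ≤ (3/4) * (ε * ‖h‖) := by linarith [mul_pos hεpos hhnorm]
        _ ≤ (3/4) * |u j h| := by linarith
        _ ≤ ‖Complex.exp (Complex.I * ((u j h : ℝ) : ℂ)) - 1‖ := hb2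
    · have harg : u j x - u k (x + h) = u j x - u k x + (-(u k h)) := by
        rw [map_add]; ring
      rw [harg]
      apply hpair j k hjk
      · rw [abs_neg]; linarith [huh k, hMh]
      · rw [abs_neg]; linarith [huh k, hMρ]
  -- full separation
  have hsep : ∀ k l : Fin n ⊕ Fin n, k ≠ l →
      δ ≤ ‖Complex.exp (Complex.I * ((lam k - lam l : ℝ) : ℂ)) - 1‖ := by
    rintro (j | j) (k | k) hkl
    · have hjk : j ≠ k := fun hc => hkl (by rw [hc])
      simp only [hlamdef, Sum.elim_inl]
      have := hpair j k hjk 0 (by norm_num) (by simp; linarith)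
      simpa using this
    · simp only [hlamdef, Sum.elim_inl, Sum.elim_inr]
      exact hmixed j k
    · simp only [hlamdef, Sum.elim_inl, Sum.elim_inr]
      have harg : u j (x + h) - u k x = -(u k x - u j (x + h)) := by ring
      rw [harg, abs_exp_I_neg]
      exact hmixed k j
    · have hjk : j ≠ k := fun hc => hkl (by rw [hc])
      simp only [hlamdef, Sum.elim_inr]
      have harg : u j (x + h) - u k (x + h) = u j x - u k x + (u j h - u k h) := by
        rw [map_add, map_add]; ring
      rw [harg]
      apply hpair j k hjk
      · have hs := abs_sub (u j h) (u k h)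
        linarith [huh j, huh k, hMh]
      · have hs := abs_sub (u j h) (u k h)
        linarith [huh j, huh k, hMρ]
  -- apply the key lemma
  have hkey := key_exp_sum c lam δ B₀ hδpos hcB hsep m N
  have hmatch : ∀ t ∈ Finset.Ico m (m + N),
      ‖∑ k, c k * Complex.exp (Complex.I * t * (lam k : ℂ))‖ ^ 2
      = ‖∑ j, (f j x * Complex.exp (Complex.I * t * (u j x))
          - f j (x + h) * Complex.exp (Complex.I * t * (u j (x + h))))‖ ^ 2 := by
    intro t _
    congr 1
    congr 1
    rw [Fintype.sum_sum_type]
    simp only [hcdef, hlamdef, Sum.elim_inl, Sum.elim_inr, neg_mul]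
    rw [eq_comm, Finset.sum_sub_distrib, sub_eq_add_neg, ← Finset.sum_neg_distrib]
  rw [Finset.sum_congr rfl hmatch] at hkey
  have hSig : 2 * C ≤ ∑ k, ‖c k‖ ^ 2 := by
    have hmem := Finset.single_le_sum (f := fun k => ‖c k‖ ^ 2)
      (fun k _ => by positivity) (Finset.mem_univ (Sum.inl j₀ : Fin n ⊕ Fin n))
    have hmem2 : ‖f j₀ x‖ ^ 2 ≤ ∑ k, ‖c k‖ ^ 2 := by
      simpa [hcdef] using hmem
    rw [hCdef]
    linarith
  have hcard : (Fintype.card (Fin n ⊕ Fin n) : ℝ) = 2 * n := by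
    simp [Fintype.card_sum]
    ring
  have hE : (Fintype.card (Fin n ⊕ Fin n) : ℝ) ^ 2 * (2 * B₀ ^ 2 / δ) ≤ C * N := by
    have he1 : (Fintype.card (Fin n ⊕ Fin n) : ℝ) ^ 2 * (2 * B₀ ^ 2 / δ)
        = 16 * (n : ℝ) ^ 2 * B₀ ^ 2 / (ε * ‖h‖) := by
      rw [hcard, hδdef]
      field_simp
      ring
    have he2 : 16 * (n : ℝ) ^ 2 * B₀ ^ 2 / (ε * C) ≤ d := le_max_right _ _
    have he3 : 16 * (n : ℝ) ^ 2 * B₀ ^ 2 / (ε * C) / ‖h‖ ≤ (N : ℝ) := by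
      apply le_trans _ hN
      gcongr
    have he4 := mul_le_mul_of_nonneg_left he3 (le_of_lt hC)
    rw [he1]
    calc 16 * (n : ℝ) ^ 2 * B₀ ^ 2 / (ε * ‖h‖)
        = C * (16 * (n : ℝ) ^ 2 * B₀ ^ 2 / (ε * C) / ‖h‖) := by
          field_simp
      _ ≤ C * N := he4
  rw [one_div, inv_mul_eq_div, le_div_iff₀ hNpos]
  have hNSig := mul_le_mul_of_nonneg_left hSig (le_of_lt hNpos)
  linarith [hkey, hE, hNSig]
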